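/- Let c ∈ Z^3 \ {0}. Then there exists a pair of generators a, b ∈ Z^3 of the group G(c) = { m ∈ Z^3 : m ⊥ c } such that Λ(a, b) := { (a·m, b·m) ∈ Z^2 : m ∈ Z^3 } = Z^2. Moreover, for ANY pair of generators a', b' ∈ Z^3 of G(c), one has Λ(a', b') = Z^2. -/

import Mathlib

open Matrix

noncomputable section

/-- `m` is an integer vector orthogonal to `c`, i.e. `m ∈ G(c)`. -/
def inGc (c m : Fin 3 → ℤ) : Prop := c ⬝ᵥ m = 0

/-- `a, b` is a pair of generators (a `ℤ`-basis) of the group `G(c) = {m : m ⊥ c}`. -/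
def GeneratorPair (c a b : Fin 3 → ℤ) : Prop :=
  inGc c a ∧ inGc c b ∧ LinearIndependent ℤ ![a, b] ∧
    ∀ m : Fin 3 → ℤ, inGc c m → ∃ s t : ℤ, m = s • a + t • b

/-- `Λ(a,b) = {(a·m, b·m) : m ∈ ℤ³}`. -/
def Lam (a b : Fin 3 → ℤ) : Set (ℤ × ℤ) :=
  Set.range fun m : Fin 3 → ℤ => (a ⬝ᵥ m, b ⬝ᵥ m)

lemma exists_triple (c : Fin 3 → ℤ) (hc : c ≠ 0) :
    ∃ a b u : Fin 3 → ℤ, ∃ dd : ℤ, dd ≠ 0 ∧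
      c ⬝ᵥ a = 0 ∧ c ⬝ᵥ b = 0 ∧ c ⬝ᵥ u = dd ∧ IsUnit (Matrix.of ![a, b, u]) := by
  have hcc : ¬ (c 0 = 0 ∧ c 1 = 0 ∧ c 2 = 0) := by
    intro ⟨h0, h1, h2⟩
    exact hc (funext fun i => by fin_cases i <;> assumption)
  by_cases h01 : c 0 = 0 ∧ c 1 = 0
  · have h2 : c 2 ≠ 0 := fun h => hcc ⟨h01.1, h01.2, h⟩
    refine ⟨![1,0,0], ![0,1,0], ![0,0,1], c 2, h2, ?_, ?_, ?_, ?_⟩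
    · simp [dotProduct, Fin.sum_univ_three, h01.1]
    · simp [dotProduct, Fin.sum_univ_three, h01.2]
    · simp [dotProduct, Fin.sum_univ_three]
    · rw [Matrix.isUnit_iff_isUnit_det]
      simp [Matrix.det_fin_three]
  · -- main case
    set d : ℤ := ((Int.gcd (Int.gcd (c 0) (c 1)) (c 2) : ℕ) : ℤ) with hd
    have hd0 : 0 ≤ d := Int.natCast_nonneg _
    have hdne : d ≠ 0 := by
      simp only [hd, ne_eq, Int.natCast_eq_zero, Int.gcd_eq_zero_iff]
      intro ⟨⟨h0, h1⟩, h2⟩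
      exact hcc ⟨h0, h1, h2⟩
    obtain ⟨p0, hp0⟩ : d ∣ c 0 := dvd_trans (Int.gcd_dvd_left _ _) (Int.gcd_dvd_left _ _)
    obtain ⟨p1, hp1⟩ : d ∣ c 1 := dvd_trans (Int.gcd_dvd_left _ _) (Int.gcd_dvd_right _ _)
    obtain ⟨p2, hp2⟩ : d ∣ c 2 := Int.gcd_dvd_right _ _
    set g : ℤ := ((Int.gcd p0 p1 : ℕ) : ℤ) with hg
    have hg0 : 0 ≤ g := Int.natCast_nonneg _
    have hgc01 : ((Int.gcd (c 0) (c 1) : ℕ) : ℤ) = d * g := by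
      rw [hp0, hp1, Int.gcd_mul_left]
      push_cast
      rw [abs_of_nonneg hd0]
    have hcop : ((Int.gcd g p2 : ℕ) : ℤ) = 1 := by
      have h1 : d = ((Int.gcd (d * g) (d * p2) : ℕ) : ℤ) := by
        rw [← hgc01, ← hp2]
      rw [Int.gcd_mul_left] at h1
      push_cast at h1
      rw [abs_of_nonneg hd0] at h1
      exact (mul_left_cancel₀ hdne (show d * 1 = d * ((Int.gcd g p2 : ℕ) : ℤ) by
        rw [mul_one, ← h1])).symm
    have hgne : g ≠ 0 := by
      simp only [hg, ne_eq, Int.natCast_eq_zero, Int.gcd_eq_zero_iff]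
      intro ⟨h0, h1⟩
      exact h01 ⟨by rw [hp0, h0, mul_zero], by rw [hp1, h1, mul_zero]⟩
    set x := Int.gcdA p0 p1 with hx
    set y := Int.gcdB p0 p1 with hy
    have hxy : g = p0 * x + p1 * y := Int.gcd_eq_gcd_ab p0 p1
    set z := Int.gcdA g p2 with hz
    set w := Int.gcdB g p2 with hw
    have hzw : 1 = g * z + p2 * w := by
      rw [← hcop]; exact Int.gcd_eq_gcd_ab g p2
    obtain ⟨q0, hq0⟩ : g ∣ p0 := Int.gcd_dvd_left _ _
    obtain ⟨q1, hq1⟩ : g ∣ p1 := Int.gcd_dvd_right _ _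
    rw [hq0, hq1] at hxy
    have hxyq : q0 * x + q1 * y = 1 := by
      apply mul_left_cancel₀ hgne
      rw [mul_one]
      linear_combination -hxy
    refine ⟨![q1, -q0, 0], ![x * p2, y * p2, -g], ![x * z, y * z, w], d, hdne, ?_, ?_, ?_, ?_⟩
    · simp only [dotProduct, Fin.sum_univ_three, Matrix.cons_val_zero, Matrix.cons_val_one,
        Matrix.head_cons, Matrix.cons_val_two, Matrix.tail_cons]
      rw [hp0, hp1, hq0, hq1]
      ring
    · simp only [dotProduct, Fin.sum_univ_three, Matrix.cons_val_zero, Matrix.cons_val_one,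
        Matrix.head_cons, Matrix.cons_val_two, Matrix.tail_cons]
      rw [hp0, hp1, hp2, hq0, hq1]
      linear_combination (d * p2 * g) * hxyq
    · simp only [dotProduct, Fin.sum_univ_three, Matrix.cons_val_zero, Matrix.cons_val_one,
        Matrix.head_cons, Matrix.cons_val_two, Matrix.tail_cons]
      rw [hp0, hp1, hp2, hq0, hq1]
      linear_combination (d * g * z) * hxyq - d * hzw
    · rw [Matrix.isUnit_iff_isUnit_det]
      have hdet : (Matrix.of ![![q1, -q0, 0], ![x * p2, y * p2, -g], ![x * z, y * z, w]]).det = 1 := by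
        simp only [Matrix.det_fin_three, Matrix.of_apply, Matrix.cons_val', Matrix.cons_val_zero,
          Matrix.cons_val_one, Matrix.head_cons, Matrix.cons_val_two, Matrix.tail_cons,
          Matrix.head_fin_const, Matrix.empty_val', Matrix.cons_val_fin_one]
        linear_combination (p2 * w + g * z) * hxyq - hzw
      rw [hdet]
      exact isUnit_one

lemma vecMul_repr (a b u v : Fin 3 → ℤ) :
    v ᵥ* (Matrix.of ![a, b, u]) = v 0 • a + v 1 • b + v 2 • u := by
  funext j
  simp [Matrix.vecMul, dotProduct, Fin.sum_univ_three]

lemma pair_coeff {a b : Fin 3 → ℤ} (h : LinearIndependent ℤ ![a, b]) {α β : ℤ}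
    (he : α • a + β • b = 0) : α = 0 ∧ β = 0 := by
  have := Fintype.linearIndependent_iff.mp h ![α, β] (by
    rw [Fin.sum_univ_two]
    simpa using he)
  exact ⟨this 0, this 1⟩

lemma pair_of_triple (c a b u : Fin 3 → ℤ) (dd : ℤ) (hdd : dd ≠ 0)
    (ha : c ⬝ᵥ a = 0) (hb : c ⬝ᵥ b = 0) (hu : c ⬝ᵥ u = dd)
    (hM : IsUnit (Matrix.of ![a, b, u])) :
    GeneratorPair c a b ∧ Lam a b = Set.univ := by
  set M : Matrix (Fin 3) (Fin 3) ℤ := Matrix.of ![a, b, u] with hMdef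
  have : Invertible M.det := (Matrix.isUnit_iff_isUnit_det M).mp hM |>.invertible
  have hInv : Invertible M := M.invertibleOfDetInvertible
  -- vecMul injectivity
  have hinj : ∀ v : Fin 3 → ℤ, v ᵥ* M = 0 → v = 0 := by
    intro v hv
    have h2 : (v ᵥ* M) ᵥ* (⅟M) = (0 : Fin 3 → ℤ) ᵥ* (⅟M) := by rw [hv]
    rwa [Matrix.vecMul_vecMul, mul_invOf_self, Matrix.vecMul_one,
      Matrix.zero_vecMul] at h2
  have hind : LinearIndependent ℤ ![a, b] := by
    rw [Fintype.linearIndependent_iff]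
    intro gg hgg
    have h0 : (![gg 0, gg 1, 0] : Fin 3 → ℤ) ᵥ* M = 0 := by
      rw [hMdef, vecMul_repr]
      rw [Fin.sum_univ_two] at hgg
      simpa using hgg
    have := hinj _ h0
    intro i
    fin_cases i
    · exact congrFun this 0
    · exact congrFun this 1
  have hspan : ∀ m : Fin 3 → ℤ, inGc c m → ∃ s t : ℤ, m = s • a + t • b := by
    intro m hm
    set v : Fin 3 → ℤ := m ᵥ* (⅟M) with hv
    have hvm : v ᵥ* M = m := by
      rw [hv, Matrix.vecMul_vecMul, invOf_mul_self, Matrix.vecMul_one]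
    have hrep : m = v 0 • a + v 1 • b + v 2 • u := by rw [← hvm, hMdef, vecMul_repr]
    have hdot : c ⬝ᵥ m = v 2 * dd := by
      rw [hrep, dotProduct_add, dotProduct_add, dotProduct_smul,
        dotProduct_smul, dotProduct_smul, ha, hb, hu]
      simp
    have hm' : c ⬝ᵥ m = 0 := hm
    have hv2 : v 2 = 0 := by
      rcases mul_eq_zero.mp (by rw [← hdot]; exact hm') with h | h
      · exact h
      · exact absurd h hdd
    exact ⟨v 0, v 1, by rw [hrep, hv2]; simp⟩
  refine ⟨⟨ha, hb, hind, hspan⟩, ?_⟩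
  ext ⟨s, t⟩
  simp only [Set.mem_univ, iff_true, Lam, Set.mem_range]
  set m : Fin 3 → ℤ := (⅟M) *ᵥ ![s, t, 0] with hm
  refine ⟨m, ?_⟩
  have hMm : M *ᵥ m = ![s, t, 0] := by
    rw [hm, Matrix.mulVec_mulVec, mul_invOf_self, Matrix.one_mulVec]
  have h0 : a ⬝ᵥ m = s := by
    have := congrFun hMm 0
    simpa [hMdef, Matrix.mulVec, dotProduct] using this
  have h1 : b ⬝ᵥ m = t := by
    have := congrFun hMm 1
    simpa [hMdef, Matrix.mulVec, dotProduct] using this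
  rw [h0, h1]

lemma lam_univ_of_pair (c a b a' b' : Fin 3 → ℤ)
    (hab : GeneratorPair c a b) (hL : Lam a b = Set.univ)
    (h' : GeneratorPair c a' b') : Lam a' b' = Set.univ := by
  obtain ⟨ha, hb, hind, hspan⟩ := hab
  obtain ⟨ha', hb', hind', hspan'⟩ := h'
  obtain ⟨p11, p12, hA⟩ := hspan a' ha'
  obtain ⟨p21, p22, hB⟩ := hspan b' hb'
  obtain ⟨q11, q12, hA'⟩ := hspan' a ha
  obtain ⟨q21, q22, hB'⟩ := hspan' b hb
  rw [hA, hB] at hA' hB'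
  have e1 : (q11 * p11 + q12 * p21 - 1) • a + (q11 * p12 + q12 * p22) • b = 0 := by
    linear_combination (norm := module) -hA'
  have e2 : (q21 * p11 + q22 * p21) • a + (q21 * p12 + q22 * p22 - 1) • b = 0 := by
    linear_combination (norm := module) -hB'
  obtain ⟨f11, f12⟩ := pair_coeff hind e1
  obtain ⟨f21, f22⟩ := pair_coeff hind e2
  have g11 : q11 * p11 + q12 * p21 = 1 := by linarith [f11]
  have g22 : q21 * p12 + q22 * p22 = 1 := by linarith [f22]
  -- matrices
  have hQP : (!![q11, q12; q21, q22] : Matrix (Fin 2) (Fin 2) ℤ) * !![p11, p12; p21, p22] = 1 := by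
    rw [Matrix.mul_fin_two, Matrix.one_fin_two, g11, f12, f21, g22]
  have hPQ := mul_eq_one_comm.mp hQP
  rw [Matrix.mul_fin_two, Matrix.one_fin_two] at hPQ
  have k11 : p11 * q11 + p12 * q21 = 1 := by simpa using congrFun (congrFun hPQ 0) 0
  have k12 : p11 * q12 + p12 * q22 = 0 := by simpa using congrFun (congrFun hPQ 0) 1
  have k21 : p21 * q11 + p22 * q21 = 0 := by simpa using congrFun (congrFun hPQ 1) 0
  have k22 : p21 * q12 + p22 * q22 = 1 := by simpa using congrFun (congrFun hPQ 1) 1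
  ext ⟨s, t⟩
  simp only [Set.mem_univ, iff_true, Lam, Set.mem_range]
  have hmem : (q11 * s + q12 * t, q21 * s + q22 * t) ∈ Lam a b := by
    rw [hL]; exact Set.mem_univ _
  obtain ⟨m, hm⟩ := hmem
  have hma : a ⬝ᵥ m = q11 * s + q12 * t := congrArg Prod.fst hm
  have hmb : b ⬝ᵥ m = q21 * s + q22 * t := congrArg Prod.snd hm
  refine ⟨m, ?_⟩
  have h1 : a' ⬝ᵥ m = s := by
    rw [hA, add_dotProduct, smul_dotProduct, smul_dotProduct,
      hma, hmb]
    simp only [smul_eq_mul]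
    linear_combination s * k11 + t * k12
  have h2 : b' ⬝ᵥ m = t := by
    rw [hB, add_dotProduct, smul_dotProduct, smul_dotProduct,
      hma, hmb]
    simp only [smul_eq_mul]
    linear_combination s * k21 + t * k22
  rw [h1, h2]

/-- For every non-zero `c ∈ ℤ³` there is a pair of generators
`a, b` of `G(c) = {m ∈ ℤ³ : m ⊥ c}` with `Λ(a,b) = ℤ²`; moreover for ANY pair of
generators `a', b'` of `G(c)` one has `Λ(a',b') = ℤ²`. -/
theorem stmt_18 (c : Fin 3 → ℤ) (hc : c ≠ 0) :
    (∃ a b : Fin 3 → ℤ, GeneratorPair c a b ∧ Lam a b = Set.univ) ∧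
    (∀ a' b' : Fin 3 → ℤ, GeneratorPair c a' b' → Lam a' b' = Set.univ) := by
  obtain ⟨a, b, u, dd, hdd, ha, hb, hu, hM⟩ := exists_triple c hc
  obtain ⟨hpair, hlam⟩ := pair_of_triple c a b u dd hdd ha hb hu hM
  exact ⟨⟨a, b, hpair, hlam⟩, fun a' b' h' => lam_univ_of_pair c a b a' b' hpair hlam h'⟩

end
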